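/- Let n ≥ 1, m = |n|, and let t be an integer with 0 ≤ t ≤ n. Let K_1 ⊆ [m] be the set of positions k such that the (k−1)-th bit (from least significant) of the binary representation of t is 1, and let K_0 = [m] \ K_1. Then for every x_1,…,x_n ∈ {0,1} there exists a unique y ∈ ℝ for which there exist z_1,…,z_m ∈ ℝ satisfying: for every q = 0,1,…,m−1 the vector (x_1,…,x_n, 1^{(2^q)}, z_1^{(1)}, z_2^{(2)}, …, z_q^{(2^{q−1})}, 1−z_{q+1}) lies in PP(n+2^{q+1}, q); and y ≥ Σ_{k∈K_0} z_k + Σ_{k∈K_1} (1−z_k) − m + 1, y ≤ z_k for every k ∈ K_0, y ≤ 1−z_k for every k ∈ K_1, and 0 ≤ y ≤ 1. Moreover, y = 1 if Σ_{i=1}^n x_i = t, and y = 0 otherwise. -/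

import Mathlib

/-- The truncated parity polytope `PP(n,q)`: the convex hull of the 0/1 vectors of
length `n` with `⌊2^{-q} Σ x_k⌋` odd. -/
def truncParityPolytope (n q : ℕ) : Set (Fin n → ℝ) :=
  convexHull ℝ
    {x : Fin n → ℝ |
      (∀ k, x k = 0 ∨ x k = 1) ∧ ∃ s : ℕ, (∑ k, x k) = (s : ℝ) ∧ Odd (s / 2 ^ q)}

/-- The vector `(x_1,…,x_n, 1^{(2^q)}, z_1^{(1)}, z_2^{(2)}, …, z_q^{(2^{q-1})},
1 - z_{q+1})` of length `n + 2^{q+1}` (with `z` 0-indexed, so `z_k = z (k-1)`). -/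
noncomputable def bitGadget (n q : ℕ) (x : Fin n → ℝ) (z : ℕ → ℝ) :
    Fin (n + 2 ^ (q + 1)) → ℝ := fun j =>
  if h : (j : ℕ) < n then x ⟨j, h⟩
  else if (j : ℕ) < n + 2 ^ q then 1
  else if (j : ℕ) = n + 2 ^ (q + 1) - 1 then 1 - z q
  else z (Nat.size ((j : ℕ) - (n + 2 ^ q) + 1) - 1)

private lemma size_pow_add {q i : ℕ} (h : i < 2 ^ q) : Nat.size (2 ^ q + i) = q + 1 := by
  refine le_antisymm (Nat.size_le.2 ?_) (Nat.lt_size.2 (Nat.le_add_right _ _))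
  have : (2:ℕ) ^ (q+1) = 2 ^ q + 2 ^ q := by rw [pow_succ]; ring
  omega

/-- `bitGadget` as a function on `ℕ`. -/
private noncomputable def gF (n q : ℕ) (x : Fin n → ℝ) (z : ℕ → ℝ) : ℕ → ℝ := fun j =>
  if h : j < n then x ⟨j, h⟩
  else if j < n + 2 ^ q then 1
  else if j = n + 2 ^ (q + 1) - 1 then 1 - z q
  else z (Nat.size (j - (n + 2 ^ q) + 1) - 1)

private lemma size_block_sum (z : ℕ → ℝ) (q : ℕ) :
    ∑ i ∈ Finset.range (2 ^ q - 1), z (Nat.size (i + 1) - 1)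
      = ∑ i ∈ Finset.range q, (2:ℝ) ^ i * z i := by
  induction q with
  | zero => simp
  | succ q ih =>
    have hp : 0 < 2 ^ q := by positivity
    have h2 : (2:ℕ) ^ (q+1) = 2 ^ q + 2 ^ q := by rw [pow_succ]; ring
    have hsplit : (2:ℕ) ^ (q+1) - 1 = (2 ^ q - 1) + 2 ^ q := by omega
    rw [hsplit, ← Finset.sum_range_add_sum_Ico _ (Nat.le_add_right _ _), ih,
      Finset.sum_range_succ]
    congr 1
    have hc : ∀ i ∈ Finset.Ico (2^q - 1) (2^q - 1 + 2^q),
        z (Nat.size (i+1) - 1) = z q := by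
      intro i hi
      rw [Finset.mem_Ico] at hi
      have hi1 : i + 1 = 2 ^ q + (i + 1 - 2^q) := by omega
      rw [hi1, size_pow_add (by omega)]
      simp
    rw [Finset.sum_congr rfl hc, Finset.sum_const, Nat.card_Ico]
    have he : 2^q - 1 + 2^q - (2^q - 1) = 2^q := by omega
    rw [he, nsmul_eq_mul]
    push_cast
    ring

private lemma bitGadget_sum (n q : ℕ) (x : Fin n → ℝ) (z : ℕ → ℝ) :
    ∑ j, bitGadget n q x z j
      = (∑ i, x i) + 2 ^ q + (∑ i ∈ Finset.range q, (2:ℝ) ^ i * z i) + (1 - z q) := by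
  have hp : 0 < 2 ^ q := by positivity
  have h2 : (2:ℕ) ^ (q+1) = 2 ^ q + 2 ^ q := by rw [pow_succ]; ring
  have hN : n + 2 ^ (q+1) = (n + 2^q + 2^q - 1) + 1 := by omega
  have h0 : ∑ j, bitGadget n q x z j
      = ∑ j ∈ Finset.range (n + 2 ^ (q+1)), gF n q x z j := by
    rw [← Fin.sum_univ_eq_sum_range]
    rfl
  rw [h0, hN, Finset.sum_range_succ,
    ← Finset.sum_range_add_sum_Ico (gF n q x z) (show n ≤ n + 2^q + 2^q - 1 by omega),
    ← Finset.sum_Ico_consecutive (gF n q x z) (show n ≤ n + 2^q by omega)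
      (show n + 2^q ≤ n + 2^q + 2^q - 1 by omega)]
  have h1 : ∑ j ∈ Finset.range n, gF n q x z j = ∑ i, x i := by
    rw [← Fin.sum_univ_eq_sum_range]
    refine Finset.sum_congr rfl fun i _ => ?_
    show gF n q x z ↑i = x i
    simp only [gF]
    rw [dif_pos i.isLt]
  have h2s : ∑ j ∈ Finset.Ico n (n + 2^q), gF n q x z j = (2:ℝ)^q := by
    have hc : ∀ j ∈ Finset.Ico n (n + 2^q), gF n q x z j = 1 := by
      intro j hj
      rw [Finset.mem_Ico] at hj
      simp only [gF]
      rw [dif_neg (by omega), if_pos hj.2]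
    rw [Finset.sum_congr rfl hc, Finset.sum_const, Nat.card_Ico]
    have : n + 2^q - n = 2^q := by omega
    rw [this, nsmul_eq_mul]
    push_cast
    ring
  have h3 : ∑ j ∈ Finset.Ico (n + 2^q) (n + 2^q + 2^q - 1), gF n q x z j
      = ∑ i ∈ Finset.range q, (2:ℝ)^i * z i := by
    rw [Finset.sum_Ico_eq_sum_range]
    have hba : n + 2^q + 2^q - 1 - (n + 2^q) = 2^q - 1 := by omega
    rw [hba, ← size_block_sum z q]
    refine Finset.sum_congr rfl fun i hi => ?_
    rw [Finset.mem_range] at hi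
    simp only [gF]
    rw [dif_neg (by omega), if_neg (by omega), if_neg (by omega)]
    have : n + 2^q + i - (n + 2^q) = i := by omega
    rw [this]
  have h4 : gF n q x z (n + 2^q + 2^q - 1) = 1 - z q := by
    simp only [gF]
    rw [dif_neg (by omega), if_neg (by omega), if_pos (by omega)]
  rw [h1, h2s, h3, h4]
  ring



private lemma hull_sum_le {N : ℕ} {V : Set (Fin N → ℝ)} (A B : Fin N → ℝ)
    (h : ∀ v ∈ V, ∑ j, (A j * v j + B j) ≤ 0) :
    ∀ p ∈ convexHull ℝ V, ∑ j, (A j * p j + B j) ≤ 0 := by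
  have hconv : Convex ℝ {p : Fin N → ℝ | ∑ j, (A j * p j + B j) ≤ 0} := by
    intro u hu v hv a b ha hb hab
    simp only [Set.mem_setOf_eq] at hu hv ⊢
    have key : ∑ j, (A j * (a • u + b • v) j + B j)
        = a * (∑ j, (A j * u j + B j)) + b * (∑ j, (A j * v j + B j)) := by
      simp only [Pi.add_apply, Pi.smul_apply, smul_eq_mul, Finset.mul_sum,
        ← Finset.sum_add_distrib]
      refine Finset.sum_congr rfl fun j _ => ?_
      linear_combination (B j) * hab.symm
    rw [key]
    have := add_le_add (mul_le_mul_of_nonneg_left hu ha) (mul_le_mul_of_nonneg_left hv hb)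
    simpa using this
  exact fun p hp => convexHull_min h hconv hp

private lemma hull_coord {N : ℕ} {V : Set (Fin N → ℝ)}
    (hV : ∀ v ∈ V, ∀ k, v k = 0 ∨ v k = 1) {p : Fin N → ℝ}
    (hp : p ∈ convexHull ℝ V) (k : Fin N) : 0 ≤ p k ∧ p k ≤ 1 := by
  have e1 : ∀ w : Fin N → ℝ,
      ∑ j, ((if j = k then (-1:ℝ) else 0) * w j + 0) = -w k := by
    intro w
    rw [Finset.sum_congr rfl (fun j _ => show (if j = k then (-1:ℝ) else 0) * w j + 0
        = (if j = k then -w j else 0) by by_cases h : j = k <;> simp [h])]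
    simp
  have e2 : ∀ w : Fin N → ℝ,
      ∑ j, ((if j = k then (1:ℝ) else 0) * w j + (if j = k then -1 else 0)) = w k - 1 := by
    intro w
    rw [Finset.sum_congr rfl (fun j _ => show (if j = k then (1:ℝ) else 0) * w j
        + (if j = k then -1 else 0) = (if j = k then w j - 1 else 0)
        by by_cases h : j = k <;> simp [h] <;> ring)]
    simp
  constructor
  · have := hull_sum_le (V := V) (fun j => if j = k then -1 else 0) (fun _ => 0)
      (fun v hv => by
        rw [e1]
        rcases hV v hv k with h | h <;> rw [h] <;> norm_num) p hp
    rw [e1] at this; linarith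
  · have := hull_sum_le (V := V) (fun j => if j = k then 1 else 0)
      (fun j => if j = k then -1 else 0)
      (fun v hv => by
        rw [e2]
        rcases hV v hv k with h | h <;> rw [h] <;> norm_num) p hp
    rw [e2] at this; linarith

private lemma testBit_iff (s q : ℕ) : s.testBit q = true ↔ s / 2 ^ q % 2 = 1 := by
  rw [Nat.testBit_eq_decide_div_mod_eq]; simp

/-- The canonical flipped-bits vector of `s`. -/
private noncomputable def zfl (s : ℕ) : ℕ → ℝ := fun i => if s.testBit i then 0 else 1

private lemma mod_pow_succ' (s q : ℕ) :
    s % 2 ^ (q + 1) = s % 2 ^ q + 2 ^ q * (s / 2 ^ q % 2) := by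
  rw [pow_succ, Nat.mod_mul]

private lemma zfl_sum (s q : ℕ) :
    ∑ i ∈ Finset.range q, (2:ℝ) ^ i * zfl s i = 2 ^ q - 1 - (s % 2 ^ q : ℕ) := by
  induction q with
  | zero => simp [Nat.mod_one]
  | succ q ih =>
    rw [Finset.sum_range_succ, ih, mod_pow_succ' s q]
    cases hb : s.testBit q
    · have h2 : s / 2 ^ q % 2 = 0 := by
        have := (testBit_iff s q).not
        simp [hb] at this; omega
      simp only [zfl, hb, h2, if_false, Bool.false_eq_true]
      push_cast
      ring
    · have h2 : s / 2 ^ q % 2 = 1 := (testBit_iff s q).1 hb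
      simp only [zfl, hb, h2, if_true]
      push_cast
      ring

/-- The total (natural-number) coordinate sum of the canonical gadget vector. -/
private def Tval (s q : ℕ) : ℕ :=
  s - s % 2 ^ q + (2 ^ (q + 1) - 1) + (s.testBit q).toNat

private lemma Tval_real (s q : ℕ) :
    (Tval s q : ℝ) = (s : ℝ) - (s % 2 ^ q : ℕ) + 2 ^ (q + 1) - 1
      + (if s.testBit q then 1 else 0) := by
  have h1 : s % 2 ^ q ≤ s := Nat.mod_le _ _
  have h2 : (1:ℕ) ≤ 2 ^ (q + 1) := Nat.one_le_two_pow
  rw [Tval]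
  cases hb : s.testBit q
  · simp only [hb, Bool.toNat_false, if_false, Bool.false_eq_true]
    push_cast [h1, h2]
    ring
  · simp only [hb, Bool.toNat_true, if_true]
    push_cast [h1, h2]
    ring

private lemma odd_Tval_div (s q : ℕ) : Odd (Tval s q / 2 ^ q) := by
  have hp : 0 < 2 ^ q := Nat.pow_pos (by norm_num)
  have hdm := Nat.div_add_mod s (2 ^ q)
  have hlt : s % 2 ^ q < 2 ^ q := Nat.mod_lt _ hp
  have h2 : (2:ℕ) ^ (q+1) = 2 ^ q + 2 ^ q := by rw [pow_succ]; ring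
  cases hb : s.testBit q
  · have h2' : s / 2 ^ q % 2 = 0 := by
      have := (testBit_iff s q).not
      simp [hb] at this; omega
    have hT : Tval s q = 2 ^ q * (s / 2 ^ q + 1) + (2 ^ q - 1) := by
      rw [Tval, hb]; simp only [Bool.toNat_false, Nat.add_zero]
      rw [Nat.mul_add, Nat.mul_one]
      generalize 2 ^ q * (s / 2 ^ q) = A at hdm ⊢
      omega
    rw [hT, Nat.mul_add_div hp, Nat.div_eq_of_lt (Nat.sub_lt hp Nat.one_pos), Nat.odd_iff]
    omega
  · have h2' : s / 2 ^ q % 2 = 1 := (testBit_iff s q).1 hb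
    have hT : Tval s q = 2 ^ q * (s / 2 ^ q + 2) := by
      rw [Tval, hb]; simp only [Bool.toNat_true]
      rw [Nat.mul_add]
      generalize 2 ^ q * (s / 2 ^ q) = A at hdm ⊢
      omega
    rw [hT, Nat.mul_div_cancel_left _ hp, Nat.odd_iff]
    omega

private lemma bitGadget_binary (n q : ℕ) (x : Fin n → ℝ) (hx : ∀ i, x i = 0 ∨ x i = 1)
    (z : ℕ → ℝ) (hz : ∀ i, i ≤ q → z i = 0 ∨ z i = 1) :
    ∀ j, bitGadget n q x z j = 0 ∨ bitGadget n q x z j = 1 := by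
  intro j
  show gF n q x z ↑j = 0 ∨ gF n q x z ↑j = 1
  simp only [gF]
  by_cases h1 : (j:ℕ) < n
  · rw [dif_pos h1]; exact hx _
  rw [dif_neg h1]
  by_cases h2 : (j:ℕ) < n + 2 ^ q
  · rw [if_pos h2]; right; rfl
  rw [if_neg h2]
  by_cases h3 : (j:ℕ) = n + 2 ^ (q+1) - 1
  · rw [if_pos h3]
    rcases hz q le_rfl with h | h <;> rw [h] <;> norm_num
  · rw [if_neg h3]
    have hj : (j:ℕ) < n + 2 ^ (q+1) := j.isLt
    have h2' : (2:ℕ) ^ (q+1) = 2 ^ q + 2 ^ q := by rw [pow_succ]; ring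
    have hlt : (j:ℕ) - (n + 2 ^ q) + 1 < 2 ^ q := by omega
    have hsle := Nat.size_le.2 hlt
    exact hz _ (by omega)

private lemma parity_contra_false (s q : ℕ) (hb : s.testBit q = false) :
    ¬ Odd ((Tval s q + 1) / 2 ^ q) := by
  have hp : 0 < 2 ^ q := by positivity
  have hdm := Nat.div_add_mod s (2 ^ q)
  have hlt : s % 2 ^ q < 2 ^ q := Nat.mod_lt _ hp
  have h2 : (2:ℕ) ^ (q+1) = 2 ^ q + 2 ^ q := by rw [pow_succ]; ring
  have h2' : s / 2 ^ q % 2 = 0 := by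
    have := (testBit_iff s q).not
    simp [hb] at this; omega
  have hT : Tval s q + 1 = 2 ^ q * (s / 2 ^ q + 2) := by
    rw [Tval, hb]; simp only [Bool.toNat_false, Nat.add_zero]
    rw [Nat.mul_add]
    generalize 2 ^ q * (s / 2 ^ q) = A at hdm ⊢
    omega
  rw [hT, Nat.mul_div_cancel_left _ hp, Nat.odd_iff]
  omega

private lemma parity_contra_true (s q : ℕ) (hb : s.testBit q = true) (s' : ℕ)
    (hs' : s' + 1 = Tval s q) : ¬ Odd (s' / 2 ^ q) := by
  have hp : 0 < 2 ^ q := by positivity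
  have hdm := Nat.div_add_mod s (2 ^ q)
  have hlt : s % 2 ^ q < 2 ^ q := Nat.mod_lt _ hp
  have h2 : (2:ℕ) ^ (q+1) = 2 ^ q + 2 ^ q := by rw [pow_succ]; ring
  have h2' : s / 2 ^ q % 2 = 1 := (testBit_iff s q).1 hb
  have hT : s' = 2 ^ q * (s / 2 ^ q + 1) + (2 ^ q - 1) := by
    rw [Tval, hb] at hs'; simp only [Bool.toNat_true] at hs'
    rw [Nat.mul_add, Nat.mul_one]
    generalize 2 ^ q * (s / 2 ^ q) = A at hdm hs' ⊢
    omega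
  rw [hT, Nat.mul_add_div hp, Nat.div_eq_of_lt (Nat.sub_lt hp Nat.one_pos), Nat.odd_iff]
  omega

private lemma forcing (n q s : ℕ) (x : Fin n → ℝ) (hx : ∀ i, x i = 0 ∨ x i = 1)
    (hs : (∑ i, x i) = (s:ℝ)) (z : ℕ → ℝ)
    (hz : ∀ i < q, z i = if s.testBit i then 0 else 1)
    (hmem : bitGadget n q x z ∈ truncParityPolytope (n + 2 ^ (q+1)) q) :
    z q = if s.testBit q then 0 else 1 := by
  have hp2 : 0 < 2 ^ q := by positivity
  have h2e : (2:ℕ) ^ (q+1) = 2 ^ q + 2 ^ q := by rw [pow_succ]; ring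
  have hN1 : 1 ≤ n + 2 ^ (q+1) := by omega
  set L : Fin (n + 2 ^ (q+1)) := ⟨n + 2 ^ (q+1) - 1, by omega⟩ with hLdef
  have hLval : (L : ℕ) = n + 2 ^ (q+1) - 1 := rfl
  set c : Fin (n + 2 ^ (q+1)) → ℝ := bitGadget n q x (zfl s) with hcdef
  set p : Fin (n + 2 ^ (q+1)) → ℝ := bitGadget n q x z with hpdef
  have hzfl01 : ∀ i, i ≤ q → zfl s i = 0 ∨ zfl s i = 1 := fun i _ => by
    unfold zfl; by_cases hb : s.testBit i <;> simp [hb]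
  have hc01 : ∀ j, c j = 0 ∨ c j = 1 := bitGadget_binary n q x hx (zfl s) hzfl01
  have hagree : ∀ j : Fin (n + 2 ^ (q+1)), j ≠ L → p j = c j := by
    intro j hj
    have hjne : (j:ℕ) ≠ n + 2 ^ (q+1) - 1 := fun h => hj (Fin.val_injective h)
    show gF n q x z ↑j = gF n q x (zfl s) ↑j
    simp only [gF]
    by_cases h1 : (j:ℕ) < n
    · rw [dif_pos h1, dif_pos h1]
    rw [dif_neg h1, dif_neg h1]
    by_cases hlt : (j:ℕ) < n + 2 ^ q
    · rw [if_pos hlt, if_pos hlt]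
    rw [if_neg hlt, if_neg hlt, if_neg hjne, if_neg hjne]
    have hjlt : (j:ℕ) < n + 2 ^ (q+1) := j.isLt
    have hlt2 : (j:ℕ) - (n + 2 ^ q) + 1 < 2 ^ q := by omega
    have hsle := Nat.size_le.2 hlt2
    have hspos : 0 < Nat.size ((j:ℕ) - (n + 2 ^ q) + 1) := Nat.size_pos.2 (by omega)
    have hidx : Nat.size ((j:ℕ) - (n + 2 ^ q) + 1) - 1 < q := by omega
    rw [hz _ hidx]; rfl
  have hcsum : ∑ j, c j = (Tval s q : ℝ) := by
    rw [hcdef, bitGadget_sum, hs, Tval_real, zfl_sum]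
    have hq : zfl s q = if s.testBit q then 0 else 1 := rfl
    rw [hq]
    by_cases hb : s.testBit q <;> simp only [hb, if_true, if_false] <;> push_cast <;> ring
  have hcL : c L = if s.testBit q then 1 else 0 := by
    show gF n q x (zfl s) ↑L = _
    rw [hLval]
    simp only [gF]
    rw [dif_neg (by omega), if_neg (by omega), if_pos trivial]
    unfold zfl; by_cases hb : s.testBit q <;> simp [hb]
  have hpL : p L = 1 - z q := by
    show gF n q x z ↑L = _
    rw [hLval]
    simp only [gF]
    rw [dif_neg (by omega), if_neg (by omega), if_pos trivial]
  set A : Fin (n + 2 ^ (q+1)) → ℝ := fun j =>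
    if (j:ℕ) = n + 2 ^ (q+1) - 1 then (if s.testBit q then -1 else 1)
    else (if c j = 1 then 1 else -1) with hAdef
  set B : Fin (n + 2 ^ (q+1)) → ℝ := fun j =>
    if (j:ℕ) = n + 2 ^ (q+1) - 1 then (if s.testBit q then 1 else 0)
    else (if c j = 1 then -1 else 0) with hBdef
  have hdecomp : ∀ v : Fin (n + 2 ^ (q+1)) → ℝ,
      ∑ j, (A j * v j + B j)
        = (if s.testBit q then 1 - v L else v L)
          - ∑ j ∈ Finset.univ.erase L, (if c j = 1 then 1 - v j else v j) := by
    intro v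
    rw [← Finset.add_sum_erase _ _ (Finset.mem_univ L)]
    have hAL : A L * v L + B L = (if s.testBit q then 1 - v L else v L) := by
      rw [hAdef, hBdef]
      simp only [hLval, if_pos rfl]
      by_cases hb : s.testBit q <;> simp [hb] <;> ring
    rw [hAL]
    have hrest : ∀ j ∈ Finset.univ.erase L,
        A j * v j + B j = -(if c j = 1 then 1 - v j else v j) := by
      intro j hj
      have hjne : (j:ℕ) ≠ n + 2 ^ (q+1) - 1 := by
        intro h; exact (Finset.mem_erase.1 hj).1 (Fin.val_injective (h.trans hLval.symm))
      rw [hAdef, hBdef]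
      simp only [if_neg hjne]
      by_cases hcj : c j = 1 <;> simp [hcj] <;> ring
    rw [Finset.sum_congr rfl hrest, Finset.sum_neg_distrib]
    abel
  have hVle : ∀ v ∈ {v : Fin (n + 2 ^ (q+1)) → ℝ |
      (∀ k, v k = 0 ∨ v k = 1) ∧ ∃ s' : ℕ, (∑ k, v k) = (s':ℝ) ∧ Odd (s' / 2 ^ q)},
      ∑ j, (A j * v j + B j) ≤ 0 := by
    rintro v ⟨hv01, s', hs', hodd⟩
    rw [hdecomp v]
    by_cases hall : ∀ j ∈ Finset.univ.erase L, v j = c j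
    · have hdist0 : ∀ j ∈ Finset.univ.erase L,
          (if c j = 1 then 1 - v j else v j) = (0:ℝ) := by
        intro j hj
        rcases hc01 j with hcj | hcj
        · rw [if_neg (by rw [hcj]; norm_num), hall j hj, hcj]
        · rw [if_pos hcj, hall j hj, hcj]; ring
      rw [Finset.sum_congr rfl hdist0, Finset.sum_const_zero, sub_zero]
      have hvsum : (s':ℝ) = (Tval s q : ℝ) - c L + v L := by
        rw [← hs', ← hcsum,
          ← Finset.add_sum_erase _ v (Finset.mem_univ L),
          ← Finset.add_sum_erase _ c (Finset.mem_univ L),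
          Finset.sum_congr rfl hall]
        ring
      cases hb : s.testBit q
      · rw [hcL, hb] at hvsum
        simp only [Bool.false_eq_true, if_false, sub_zero] at hvsum
        rcases hv01 L with hvL | hvL
        · simp only [Bool.false_eq_true, if_false]
          rw [hvL]
        · exfalso
          rw [hvL] at hvsum
          have hcast : (s':ℝ) = ((Tval s q + 1 : ℕ) : ℝ) := by push_cast; linarith
          have hs'e : s' = Tval s q + 1 := by exact_mod_cast hcast
          exact parity_contra_false s q hb (hs'e ▸ hodd)
      · rw [hcL, hb] at hvsum
        simp only [if_true] at hvsum
        rcases hv01 L with hvL | hvL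
        · exfalso
          rw [hvL] at hvsum
          have hcast : ((s' + 1 : ℕ) : ℝ) = (Tval s q : ℝ) := by push_cast; linarith
          have hs'e : s' + 1 = Tval s q := by exact_mod_cast hcast
          exact parity_contra_true s q hb s' hs'e hodd
        · simp only [if_true]
          rw [hvL]; norm_num
    · push_neg at hall
      obtain ⟨j0, hj0mem, hj0ne⟩ := hall
      have hd0 : (if c j0 = 1 then 1 - v j0 else v j0) = (1:ℝ) := by
        rcases hc01 j0 with hcj | hcj <;> rcases hv01 j0 with hvj | hvj
        · exact absurd (by rw [hvj, hcj]) hj0ne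
        · rw [if_neg (by rw [hcj]; norm_num), hvj]
        · rw [if_pos hcj, hvj]; ring
        · exact absurd (by rw [hvj, hcj]) hj0ne
      have hnonneg : ∀ j ∈ Finset.univ.erase L,
          (0:ℝ) ≤ (if c j = 1 then 1 - v j else v j) := by
        intro j _
        rcases hv01 j with hvj | hvj <;> by_cases hcj : c j = 1 <;> simp [hcj, hvj]
      have hge1 : (1:ℝ) ≤ ∑ j ∈ Finset.univ.erase L, (if c j = 1 then 1 - v j else v j) := by
        exact le_trans (le_of_eq hd0.symm) (Finset.single_le_sum hnonneg hj0mem)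
      have htl : (if s.testBit q then 1 - v L else v L) ≤ 1 := by
        rcases hv01 L with hvL | hvL <;> cases hb : s.testBit q <;> simp [hvL] <;> norm_num
      linarith
  have hmem' : p ∈ convexHull ℝ {v : Fin (n + 2 ^ (q+1)) → ℝ |
      (∀ k, v k = 0 ∨ v k = 1) ∧ ∃ s' : ℕ, (∑ k, v k) = (s':ℝ) ∧ Odd (s' / 2 ^ q)} := hmem
  have hgp : ∑ j, (A j * p j + B j) ≤ 0 := hull_sum_le A B hVle p hmem'
  rw [hdecomp p] at hgp
  have hdistp : ∀ j ∈ Finset.univ.erase L,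
      (if c j = 1 then 1 - p j else p j) = (0:ℝ) := by
    intro j hj
    have hag := hagree j (Finset.mem_erase.1 hj).1
    rcases hc01 j with hcj | hcj
    · rw [if_neg (by rw [hcj]; norm_num), hag, hcj]
    · rw [if_pos hcj, hag, hcj]; ring
  rw [Finset.sum_congr rfl hdistp, Finset.sum_const_zero, sub_zero] at hgp
  have hbounds := hull_coord (fun v hv => hv.1) hmem' L
  cases hb : s.testBit q
  · rw [hb] at hgp
    simp only [Bool.false_eq_true, if_false] at hgp ⊢
    have : p L = 0 := le_antisymm hgp hbounds.1
    rw [hpL] at this; linarith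
  · rw [hb] at hgp
    simp only [if_true] at hgp ⊢
    have : p L = 1 := by linarith [hbounds.2]
    rw [hpL] at this; linarith

private lemma canonical_mem (n q s : ℕ) (x : Fin n → ℝ) (hx : ∀ i, x i = 0 ∨ x i = 1)
    (hs : (∑ i, x i) = (s:ℝ)) (z : ℕ → ℝ)
    (hz : ∀ i, i ≤ q → z i = if s.testBit i then 0 else 1) :
    bitGadget n q x z ∈ truncParityPolytope (n + 2 ^ (q+1)) q := by
  refine subset_convexHull ℝ _ ?_
  refine ⟨bitGadget_binary n q x hx z (fun i hi => by
    rw [hz i hi]; by_cases hb : s.testBit i <;> simp [hb]), Tval s q, ?_, odd_Tval_div s q⟩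
  rw [bitGadget_sum, hs, Tval_real]
  have hblk : ∑ i ∈ Finset.range q, (2:ℝ) ^ i * z i = 2 ^ q - 1 - (s % 2 ^ q : ℕ) := by
    rw [← zfl_sum s q]
    refine Finset.sum_congr rfl fun i hi => ?_
    rw [Finset.mem_range] at hi
    rw [hz i hi.le]; rfl
  rw [hblk, hz q le_rfl]
  by_cases hb : s.testBit q <;> simp only [hb, if_true, if_false] <;> push_cast <;> ring

/-- The constraints of the exact-counting gate `EX_{n,t}(x, y)`: the truncated parity
polytope constraints computing the flipped bits `z_1,…,z_m` (where `m = |n| =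
Nat.size n`) of `Σ x_i`, together with the AND-comparator constraints against the bits
of `t`.  Here `K_1 ⊆ [m]` is the set of (1-based) positions `k` such that bit `k-1` of
`t` is `1` (expressed 0-indexed via `Nat.testBit`), and `K_0` its complement. -/
noncomputable def ExGateCond (n t : ℕ) (x : Fin n → ℝ) (y : ℝ)
    (z : Fin (Nat.size n) → ℝ) : Prop :=
  (∀ q, q < Nat.size n →
      bitGadget n q x (fun i => if h : i < Nat.size n then z ⟨i, h⟩ else 0) ∈
        truncParityPolytope (n + 2 ^ (q + 1)) q) ∧
  ((∑ k : Fin (Nat.size n),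
      if t.testBit (k : ℕ) then 1 - z k else z k) - (Nat.size n : ℝ) + 1 ≤ y) ∧
  (∀ k : Fin (Nat.size n), ¬ t.testBit (k : ℕ) → y ≤ z k) ∧
  (∀ k : Fin (Nat.size n), t.testBit (k : ℕ) → y ≤ 1 - z k) ∧
  0 ≤ y ∧ y ≤ 1

theorem statement18 (n t : ℕ) (hn : 1 ≤ n) (ht : t ≤ n)
    (x : Fin n → ℝ) (hx : ∀ i, x i = 0 ∨ x i = 1) :
    (∃! y : ℝ, ∃ z : Fin (Nat.size n) → ℝ, ExGateCond n t x y z) ∧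
    ∀ y : ℝ, (∃ z : Fin (Nat.size n) → ℝ, ExGateCond n t x y z) →
      ((∑ i, x i) = (t : ℝ) → y = 1) ∧ ((∑ i, x i) ≠ (t : ℝ) → y = 0) := by
  classical
  set m := Nat.size n with hm
  obtain ⟨s, hs, hsn⟩ : ∃ s : ℕ, (∑ i, x i) = (s:ℝ) ∧ s ≤ n := by
    refine ⟨∑ i, if x i = 1 then 1 else 0, ?_, ?_⟩
    · push_cast
      refine Finset.sum_congr rfl fun i _ => ?_
      rcases hx i with h | h <;> simp [h]
    · calc (∑ i, if x i = 1 then 1 else 0) ≤ ∑ _i : Fin n, 1 :=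
            Finset.sum_le_sum (fun i _ => by split <;> omega)
        _ = n := by simp
  have hm1 : 1 ≤ m := Nat.lt_size.2 (by simpa using hn)
  have hslt : s < 2 ^ m := lt_of_le_of_lt hsn (Nat.lt_size_self n)
  have htlt : t < 2 ^ m := lt_of_le_of_lt ht (Nat.lt_size_self n)
  have hK : s ≠ t → ∃ K : Fin m, s.testBit (K:ℕ) ≠ t.testBit (K:ℕ) := by
    intro hst
    obtain ⟨i, hdiff⟩ := Nat.exists_testBit_ne_of_ne hst
    have him : i < m := by
      by_contra hge
      push_neg at hge
      have h1' : s.testBit i = false :=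
        Nat.testBit_lt_two_pow (lt_of_lt_of_le hslt (Nat.pow_le_pow_right (by norm_num) hge))
      have h2' : t.testBit i = false :=
        Nat.testBit_lt_two_pow (lt_of_lt_of_le htlt (Nat.pow_le_pow_right (by norm_num) hge))
      exact hdiff (h1'.trans h2'.symm)
    exact ⟨⟨i, him⟩, hdiff⟩
  have hforced : ∀ (y : ℝ) (z : Fin m → ℝ), ExGateCond n t x y z →
      ∀ k : Fin m, z k = if s.testBit (k:ℕ) then 0 else 1 := by
    intro y z hc k
    obtain ⟨hmem, -⟩ := hc
    suffices H : ∀ j, ∀ hj : j < m, z ⟨j, hj⟩ = if s.testBit j then 0 else 1 by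
      have := H k k.isLt
      simpa using this
    intro j
    induction j using Nat.strong_induction_on with
    | _ j ih =>
      intro hj
      have hf := forcing n j s x hx hs
        (fun i => if h : i < m then z ⟨i, h⟩ else 0)
        (fun i hi => by simp only [dif_pos (hi.trans hj)]; exact ih i hi _)
        (hmem j hj)
      simpa only [dif_pos hj] using hf
  have hydet : ∀ (y : ℝ) (z : Fin m → ℝ), ExGateCond n t x y z →
      y = if s = t then 1 else 0 := by
    intro y z hc
    have hzv := hforced y z hc
    obtain ⟨-, hlow, h0, h1, hy0, hy1⟩ := hc
    by_cases hst : s = t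
    · rw [if_pos hst]
      have hsum : (∑ k : Fin m, if t.testBit (k:ℕ) then 1 - z k else z k) = (m:ℝ) := by
        calc (∑ k : Fin m, if t.testBit (k:ℕ) then 1 - z k else z k)
            = ∑ _k : Fin m, (1:ℝ) := Finset.sum_congr rfl fun k _ => by
              rw [hzv k, ← hst]
              by_cases hb : s.testBit (k:ℕ) <;> simp [hb]
          _ = m := by simp
      rw [hsum] at hlow
      linarith
    · rw [if_neg hst]
      obtain ⟨K, hdiff⟩ := hK hst
      have hzK := hzv K
      cases hbt : t.testBit (K:ℕ)
      · have hbs : s.testBit (K:ℕ) = true := by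
          cases hbs : s.testBit (K:ℕ)
          · exact absurd (hbs.trans hbt.symm) hdiff
          · rfl
        have hle := h0 K (by simp [hbt])
        rw [hzK, hbs, if_pos rfl] at hle
        linarith
      · have hbs : s.testBit (K:ℕ) = false := by
          cases hbs : s.testBit (K:ℕ)
          · rfl
          · exact absurd (hbs.trans hbt.symm) hdiff
        have hle := h1 K (by simp [hbt])
        rw [hzK, hbs] at hle
        simp only [Bool.false_eq_true, if_false] at hle
        linarith
  set z₀ : Fin m → ℝ := fun k => if s.testBit (k:ℕ) then 0 else 1 with hz₀
  set y₀ : ℝ := if s = t then 1 else 0 with hy₀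
  have hcond : ExGateCond n t x y₀ z₀ := by
    refine ⟨?_, ?_, ?_, ?_, ?_, ?_⟩
    · intro q hq
      refine canonical_mem n q s x hx hs _ (fun i hi => ?_)
      rw [dif_pos (lt_of_le_of_lt hi hq)]
    · by_cases hst : s = t
      · have hsum : (∑ k : Fin m, if t.testBit (k:ℕ) then 1 - z₀ k else z₀ k) = (m:ℝ) := by
          calc (∑ k : Fin m, if t.testBit (k:ℕ) then 1 - z₀ k else z₀ k)
              = ∑ _k : Fin m, (1:ℝ) := Finset.sum_congr rfl fun k _ => by
                rw [hz₀, ← hst]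
                by_cases hb : s.testBit (k:ℕ) <;> simp [hb]
            _ = m := by simp
        rw [hsum, hy₀, if_pos hst]
        linarith
      · obtain ⟨K, hdiff⟩ := hK hst
        have hwle : ∀ k : Fin m, (if t.testBit (k:ℕ) then 1 - z₀ k else z₀ k)
            ≤ (if k = K then 0 else 1) := by
          intro k
          by_cases hkK : k = K
          · subst hkK
            rw [if_pos rfl]
            cases hbt : t.testBit (k:ℕ)
            · have hbs : s.testBit (k:ℕ) = true := by
                cases hbs : s.testBit (k:ℕ)
                · exact absurd (hbs.trans hbt.symm) hdiff
                · rfl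
              simp [hz₀, hbs]
            · have hbs : s.testBit (k:ℕ) = false := by
                cases hbs : s.testBit (k:ℕ)
                · rfl
                · exact absurd (hbs.trans hbt.symm) hdiff
              simp [hz₀, hbs]
          · rw [if_neg hkK]
            by_cases hb : s.testBit (k:ℕ) <;> cases hbt : t.testBit (k:ℕ) <;>
              simp [hz₀, hb, hbt] <;> norm_num
        have hsumle : (∑ k : Fin m, if t.testBit (k:ℕ) then 1 - z₀ k else z₀ k)
            ≤ (m:ℝ) - 1 := by
          calc (∑ k : Fin m, if t.testBit (k:ℕ) then 1 - z₀ k else z₀ k)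
              ≤ ∑ k : Fin m, (if k = K then (0:ℝ) else 1) :=
                Finset.sum_le_sum (fun k _ => hwle k)
            _ = ∑ k : Fin m, ((1:ℝ) - (if k = K then 1 else 0)) := by
                refine Finset.sum_congr rfl fun k _ => ?_
                by_cases hkK : k = K <;> simp [hkK]
            _ = (m:ℝ) - 1 := by
                rw [Finset.sum_sub_distrib]
                simp [Finset.sum_ite_eq']
        rw [hy₀, if_neg hst]
        linarith
    · intro k hk
      have hbt : t.testBit (k:ℕ) = false := by
        cases hbt : t.testBit (k:ℕ)
        · rfl
        · exact absurd hbt hk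
      rw [hz₀, hy₀]
      by_cases hst : s = t
      · simp [hst, hbt]
      · rw [if_neg hst]
        by_cases hb : s.testBit (k:ℕ) <;> simp [hb]
    · intro k hk
      rw [hz₀, hy₀]
      by_cases hst : s = t
      · simp [hst, hk]
      · rw [if_neg hst]
        by_cases hb : s.testBit (k:ℕ) <;> simp [hb] <;> norm_num
    · rw [hy₀]; split <;> norm_num
    · rw [hy₀]; split <;> norm_num
  constructor
  · exact ⟨y₀, ⟨z₀, hcond⟩, fun y' hy' => by
      obtain ⟨z', hc'⟩ := hy'
      exact hydet y' z' hc'⟩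
  · intro y hy
    obtain ⟨z, hc⟩ := hy
    have hyv := hydet y z hc
    constructor
    · intro hsum
      have hcast : (s:ℝ) = (t:ℝ) := hs.symm.trans hsum
      have : s = t := by exact_mod_cast hcast
      rw [hyv, hy₀, if_pos this]
    · intro hne
      have : s ≠ t := fun h => hne (by rw [hs, h])
      rw [hyv, hy₀, if_neg this]
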